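/- Let I be a totally ordered set with a smallest element and let A be a Banach algebra admitting a character φ. Then the upper triangular matrix Banach algebra UP(I,A) is strong pseudo-amenable if and only if A is strong pseudo-amenable and |I| = 1. -/

import Mathlib

noncomputable section

open ContinuousLinearMap NormedSpace

/-- The topological dual of a seminormed space `E` (the pre-2025 Mathlib `NormedSpace.Dual`). -/
abbrev NormedSpace.Dual (𝕜 : Type*) [NontriviallyNormedField 𝕜] (E : Type*) [SeminormedAddCommGroup E]
    [NormedSpace 𝕜 E] : Type _ :=
  E →L[𝕜] 𝕜

/-- A directed index system for nets. -/
structure DirSys : Type 1 where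
  ι : Type
  le : ι → ι → Prop
  refl : ∀ i, le i i
  trans : ∀ {i j k}, le i j → le j k → le i k
  nonempty : Nonempty ι
  directed : ∀ i j, ∃ k, le i k ∧ le j k

/-- Convergence of a net indexed by a directed system, in a (pseudo)metric space. -/
def DirSys.Tendsto (D : DirSys) {X : Type*} [PseudoMetricSpace X] (m : D.ι → X) (x : X) : Prop :=
  ∀ ε : ℝ, 0 < ε → ∃ i, ∀ j, D.le i j → dist (m j) x < ε

variable (A : Type*) [NonUnitalNormedRing A] [NormedSpace ℂ A]
  [IsScalarTower ℂ A A] [SMulCommClass ℂ A A]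

/-- The continuous bilinear forms on `A`, i.e. the dual space of the projective tensor
product `A ⊗̂ A`. -/
abbrev BilForms := A →L[ℂ] NormedSpace.Dual ℂ A

/-- The bidual `(A ⊗̂ A)**` of the projective tensor product, realized concretely as the
dual space of the space of continuous bilinear forms on `A` (the latter being canonically,
isometrically, the dual of `A ⊗̂ A`). -/
abbrev TensorBidual := NormedSpace.Dual ℂ (BilForms A)

/-- The bidual `A**` of `A`. -/
abbrev Bidual := NormedSpace.Dual ℂ (NormedSpace.Dual ℂ A)

variable {A}

/-- The elementary tensor `x ⊗ y`, viewed inside `(A ⊗̂ A)**` via the canonical isometric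
embedding of `A ⊗̂ A` into its bidual. -/
def elemT (x y : A) : TensorBidual A :=
  (ContinuousLinearMap.apply ℂ ℂ y).comp (ContinuousLinearMap.apply ℂ (NormedSpace.Dual ℂ A) x)

variable (A)

/-- The canonical isometric copy of `A ⊗̂ A` inside its bidual: the closure of the linear
span of the elementary tensors. -/
def ptp : Submodule ℂ (TensorBidual A) :=
  (Submodule.span ℂ {m : TensorBidual A | ∃ x y : A, m = elemT x y}).topologicalClosure

/-- The map `f ↦ f·a` on bilinear forms, `(f·a)(x,y) = f(ax, y)`; predual of the left
module action of `A` on `(A ⊗̂ A)**`. -/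
def leftBil (a : A) : BilForms A →L[ℂ] BilForms A :=
  (compL ℂ A A (NormedSpace.Dual ℂ A)).flip (ContinuousLinearMap.mul ℂ A a)

/-- The map `f ↦ a·f` on bilinear forms, `(a·f)(x,y) = f(x, ya)`; predual of the right
module action of `A` on `(A ⊗̂ A)**`. -/
def rightBil (a : A) : BilForms A →L[ℂ] BilForms A :=
  compL ℂ A (NormedSpace.Dual ℂ A) (NormedSpace.Dual ℂ A)
    ((compL ℂ A A ℂ).flip ((ContinuousLinearMap.mul ℂ A).flip a))

variable {A}

/-- The left module action `a · m` of `A` on `(A ⊗̂ A)**`, extending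
`a · (x ⊗ y) = (a x) ⊗ y`. -/
def tsmulL (a : A) (m : TensorBidual A) : TensorBidual A := m.comp (leftBil A a)

/-- The right module action `m · a` of `A` on `(A ⊗̂ A)**`, extending
`(x ⊗ y) · a = x ⊗ (y a)`. -/
def tsmulR (a : A) (m : TensorBidual A) : TensorBidual A := m.comp (rightBil A a)

variable (A)

/-- The adjoint `π_A* : A* → (A ⊗̂ A)*` of the product morphism `π_A`, namely
`(π_A* f)(x, y) = f (x y)`. -/
def piStar : NormedSpace.Dual ℂ A →L[ℂ] BilForms A :=
  ((compL ℂ A (A →L[ℂ] A) (NormedSpace.Dual ℂ A)).flip (ContinuousLinearMap.mul ℂ A)).comp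
    (compL ℂ A A ℂ)

variable {A}

/-- The second adjoint `π_A** : (A ⊗̂ A)** → A**` of the product morphism. -/
def piSS (m : TensorBidual A) : Bidual A := m.comp (piStar A)

variable (A)

/-- The map `f ↦ f·a` on `A*`, `(f·a)(x) = f(ax)`. -/
def dualROp (a : A) : NormedSpace.Dual ℂ A →L[ℂ] NormedSpace.Dual ℂ A :=
  (compL ℂ A A ℂ).flip (ContinuousLinearMap.mul ℂ A a)

/-- The map `f ↦ a·f` on `A*`, `(a·f)(x) = f(xa)`. -/
def dualLOp (a : A) : NormedSpace.Dual ℂ A →L[ℂ] NormedSpace.Dual ℂ A :=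
  (compL ℂ A A ℂ).flip ((ContinuousLinearMap.mul ℂ A).flip a)

variable {A}

/-- The product `a · Φ` of `a ∈ A` and `Φ ∈ A**`: `(a·Φ)(f) = Φ(f·a)`. -/
def bsmulL (a : A) (Φ : Bidual A) : Bidual A := Φ.comp (dualROp A a)

/-- The product `Φ · a` of `Φ ∈ A**` and `a ∈ A`: `(Φ·a)(f) = Φ(a·f)`. -/
def bsmulR (a : A) (Φ : Bidual A) : Bidual A := Φ.comp (dualLOp A a)

/-- The canonical isometric embedding of `A` into its bidual. -/
def inclB (a : A) : Bidual A := NormedSpace.inclusionInDoubleDual ℂ A a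

variable (A)

/-- A Banach algebra `A` is *strong pseudo-amenable* if there is a (not necessarily bounded)
net `(m_α)` in `(A ⊗̂ A)**` such that `a·m_α − m_α·a → 0` and
`a·π_A**(m_α) = π_A**(m_α)·a → a` for every `a ∈ A`. -/
def StrongPseudoAmenable : Prop :=
  ∃ (D : DirSys) (m : D.ι → TensorBidual A),
    (∀ a : A, D.Tendsto (fun α => tsmulL a (m α) - tsmulR a (m α)) 0) ∧
    (∀ (a : A) (α : D.ι), bsmulL a (piSS (m α)) = bsmulR a (piSS (m α))) ∧
    (∀ a : A, D.Tendsto (fun α => bsmulR a (piSS (m α))) (inclB a))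

/-- A Banach algebra `A` is *pseudo-amenable* if there is a (not necessarily bounded)
net `(m_α)` in `A ⊗̂ A` such that `a·m_α − m_α·a → 0` and `π_A(m_α)a → a` for every `a ∈ A`. -/
def PseudoAmenable : Prop :=
  ∃ (D : DirSys) (m : D.ι → TensorBidual A),
    (∀ α, m α ∈ ptp A) ∧
    (∀ a : A, D.Tendsto (fun α => tsmulL a (m α) - tsmulR a (m α)) 0) ∧
    (∀ a : A, D.Tendsto (fun α => bsmulR a (piSS (m α))) (inclB a))

/-- A Banach algebra `A` is *pseudo-contractible* if there is a net `(m_α)` in `A ⊗̂ A`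
such that `a·m_α = m_α·a` and `π_A(m_α)a → a` for every `a ∈ A`. -/
def PseudoContractible : Prop :=
  ∃ (D : DirSys) (m : D.ι → TensorBidual A),
    (∀ α, m α ∈ ptp A) ∧
    (∀ (a : A) (α : D.ι), tsmulL a (m α) = tsmulR a (m α)) ∧
    (∀ a : A, D.Tendsto (fun α => bsmulR a (piSS (m α))) (inclB a))

/-- A Banach algebra `A` is *amenable* if it has a bounded approximate diagonal: a bounded
net `(m_α)` in `A ⊗̂ A` such that `a·m_α − m_α·a → 0` and `π_A(m_α)a → a` for every `a ∈ A`. -/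
def AmenableBanachAlgebra : Prop :=
  ∃ (D : DirSys) (m : D.ι → TensorBidual A) (C : ℝ),
    (∀ α, m α ∈ ptp A) ∧
    (∀ α, ‖m α‖ ≤ C) ∧
    (∀ a : A, D.Tendsto (fun α => tsmulL a (m α) - tsmulR a (m α)) 0) ∧
    (∀ a : A, D.Tendsto (fun α => bsmulR a (piSS (m α))) (inclB a))

end

/-- A character on `A`: a nonzero multiplicative linear functional. -/
def IsCharacter (A : Type) [NonUnitalNormedRing A] [NormedSpace ℂ A] (φ : A →ₗ[ℂ] ℂ) : Prop :=
  φ ≠ 0 ∧ ∀ a b : A, φ (a * b) = φ a * φ b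

/-- `(U, e)` is a realization of the Banach algebra `UP(I, A)` of upper triangular `I × I`
matrices over `A` with finite `ℓ¹`-norm: `e i j a` is the matrix with entry `a` in position
`(i,j)` (for `i ≤ j`; positions with `i > j` are zero), multiplication is matrix
multiplication, finite sums of entries have the `ℓ¹`-norm, and such matrices are dense. -/
def IsUpperTriangularL1 (I : Type) [LinearOrder I] (A : Type)
    [NonUnitalNormedRing A] [NormedSpace ℂ A]
    (U : Type) [NonUnitalNormedRing U] [NormedSpace ℂ U] (e : I → I → A → U) : Prop :=
  (∀ i j : I, IsLinearMap ℂ (e i j)) ∧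
  (∀ (i j : I) (a : A), ¬ i ≤ j → e i j a = 0) ∧
  (∀ i j k l : I, i ≤ j → k ≤ l → ∀ (a b : A),
      e i j a * e k l b = if j = k then e i l (a * b) else 0) ∧
  (∀ (s : Finset (I × I)) (f : I × I → A),
      ‖∑ p ∈ s, e p.1 p.2 (f p)‖ = ∑ p ∈ s.filter (fun p => p.1 ≤ p.2), ‖f p‖) ∧
  ((Submodule.span ℂ {u : U | ∃ i j a, i ≤ j ∧ u = e i j a}).topologicalClosure = ⊤)


noncomputable section Aux

open ContinuousLinearMap NormedSpace

instance instSeminormedAddCommGroupBilForms (A : Type*) [NonUnitalNormedRing A] [NormedSpace ℂ A] :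
    SeminormedAddCommGroup (BilForms A) := inferInstance

instance instNormedSpaceBilForms (A : Type*) [NonUnitalNormedRing A] [NormedSpace ℂ A] :
    NormedSpace ℂ (BilForms A) := inferInstance

/-- Automatic continuity of characters on non-unital Banach algebras. -/
theorem char_norm_le {A : Type*} [NonUnitalNormedRing A] [NormedSpace ℂ A]
    [CompleteSpace A] (φ : A →ₗ[ℂ] ℂ) (hmul : ∀ a b : A, φ (a * b) = φ a * φ b)
    (a : A) : ‖φ a‖ ≤ ‖a‖ := by
  by_contra h
  push_neg at h
  have hφa : φ a ≠ 0 := by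
    intro h0
    rw [h0, norm_zero] at h
    exact absurd h (not_lt.2 (norm_nonneg a))
  set b : A := (φ a)⁻¹ • a with hb
  have hφb : φ b = 1 := by
    rw [hb, map_smul, smul_eq_mul, inv_mul_cancel₀ hφa]
  have hbn : ‖b‖ < 1 := by
    rw [hb, norm_smul, norm_inv]
    have h0 : (0:ℝ) < ‖φ a‖ := norm_pos_iff.2 hφa
    rw [inv_mul_lt_one₀ h0]
    simpa using h
  have hlip : LipschitzWith ‖b‖₊ (fun x : A => b + b * x) := by
    apply LipschitzWith.of_dist_le_mul
    intro x y
    simp only [dist_eq_norm, add_sub_add_left_eq_sub, ← mul_sub]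
    calc ‖b * (x - y)‖ ≤ ‖b‖ * ‖x - y‖ := norm_mul_le _ _
    _ = ‖b‖₊ * ‖x - y‖ := by simp [coe_nnnorm]
  have hcon : ContractingWith ‖b‖₊ (fun x : A => b + b * x) := by
    refine ⟨?_, hlip⟩
    rwa [← NNReal.coe_lt_coe, coe_nnnorm, NNReal.coe_one]
  have : Nonempty A := ⟨0⟩
  set c := hcon.fixedPoint (fun x : A => b + b * x)
  have hc : b + b * c = c := hcon.fixedPoint_isFixedPt
  have h2 := congrArg φ hc
  rw [map_add, hmul, hφb, one_mul] at h2
  have : (1 : ℂ) = 0 := by linear_combination h2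
  exact one_ne_zero this

set_option maxHeartbeats 2000000 in
/-- Strong pseudo-amenability transfers along a continuous multiplicative linear
surjection (with a set-theoretic section). -/
theorem spa_transfer {U A : Type} [NonUnitalNormedRing A] [NormedSpace ℂ A]
    [IsScalarTower ℂ A A] [SMulCommClass ℂ A A]
    [NonUnitalNormedRing U] [NormedSpace ℂ U] [IsScalarTower ℂ U U] [SMulCommClass ℂ U U]
    (θ : U →L[ℂ] A) (hθ : ∀ x y : U, θ (x * y) = θ x * θ y)
    (σ : A → U) (hσ : ∀ a, θ (σ a) = a) :
    StrongPseudoAmenable U → StrongPseudoAmenable A := by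
  rintro ⟨D, m, h1, h2, h3⟩
  set θd : NormedSpace.Dual ℂ A →L[ℂ] NormedSpace.Dual ℂ U := (compL ℂ U A ℂ).flip θ with hθd
  set T : BilForms A →L[ℂ] BilForms U :=
    (compL ℂ U (NormedSpace.Dual ℂ A) (NormedSpace.Dual ℂ U) θd).comp
      ((compL ℂ U A (NormedSpace.Dual ℂ A)).flip θ) with hT
  have hTapp : ∀ (B : BilForms A) (x y : U), T B x y = B (θ x) (θ y) := fun _ _ _ => rfl
  have hTL : ∀ (a : A) (B : BilForms A), T (leftBil A a B) = leftBil U (σ a) (T B) := by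
    intro a B
    ext x y
    show B (a * θ x) (θ y) = B (θ (σ a * x)) (θ y)
    rw [hθ, hσ]
  have hTR : ∀ (a : A) (B : BilForms A), T (rightBil A a B) = rightBil U (σ a) (T B) := by
    intro a B
    ext x y
    show B (θ x) (θ y * a) = B (θ x) (θ (y * σ a))
    rw [hθ, hσ]
  have hpiT : ∀ f : NormedSpace.Dual ℂ A, T (piStar A f) = piStar U (θd f) := by
    intro f
    ext x y
    show f (θ x * θ y) = f (θ (x * y))
    rw [hθ]
  have hdR : ∀ (a : A) (f : NormedSpace.Dual ℂ A),
      θd (dualROp A a f) = dualROp U (σ a) (θd f) := by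
    intro a f
    ext x
    show f (a * θ x) = f (θ (σ a * x))
    rw [hθ, hσ]
  have hdL : ∀ (a : A) (f : NormedSpace.Dual ℂ A),
      θd (dualLOp A a f) = dualLOp U (σ a) (θd f) := by
    intro a f
    ext x
    show f (θ x * a) = f (θ (x * σ a))
    rw [hθ, hσ]
  refine ⟨D, fun α => (m α).comp T, ?_, ?_, ?_⟩
  · intro a ε hε
    obtain ⟨i, hi⟩ := h1 (σ a) (ε / (‖T‖ + 1)) (by positivity)
    refine ⟨i, fun j hj => ?_⟩
    have key : tsmulL a ((m j).comp T) - tsmulR a ((m j).comp T)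
        = (tsmulL (σ a) (m j) - tsmulR (σ a) (m j)).comp T := by
      rw [ContinuousLinearMap.sub_comp]
      congr 1
      · ext B
        show (m j) (T (leftBil A a B)) = (m j) (leftBil U (σ a) (T B))
        rw [hTL]
      · ext B
        show (m j) (T (rightBil A a B)) = (m j) (rightBil U (σ a) (T B))
        rw [hTR]
    dsimp only
    rw [dist_zero_right, key]
    have hY : ‖tsmulL (σ a) (m j) - tsmulR (σ a) (m j)‖ < ε / (‖T‖ + 1) := by
      have := hi j hj
      rwa [dist_zero_right] at this
    calc ‖(tsmulL (σ a) (m j) - tsmulR (σ a) (m j)).comp T‖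
        ≤ ‖tsmulL (σ a) (m j) - tsmulR (σ a) (m j)‖ * ‖T‖ := opNorm_comp_le _ _
      _ ≤ ‖tsmulL (σ a) (m j) - tsmulR (σ a) (m j)‖ * (‖T‖ + 1) := by
          apply mul_le_mul_of_nonneg_left (by linarith) (norm_nonneg _)
      _ < ε := by
          rw [← lt_div_iff₀ (by positivity : (0:ℝ) < ‖T‖ + 1)]
          exact hY
  · intro a α
    have hpiSS : piSS ((m α).comp T) = (piSS (m α)).comp θd := by
      ext f
      show (m α) (T (piStar A f)) = (m α) (piStar U (θd f))
      rw [hpiT]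
    rw [hpiSS]
    have hbL : bsmulL a ((piSS (m α)).comp θd) = (bsmulL (σ a) (piSS (m α))).comp θd := by
      ext f
      show (piSS (m α)) (θd (dualROp A a f)) = (piSS (m α)) (dualROp U (σ a) (θd f))
      rw [hdR]
    have hbR : bsmulR a ((piSS (m α)).comp θd) = (bsmulR (σ a) (piSS (m α))).comp θd := by
      ext f
      show (piSS (m α)) (θd (dualLOp A a f)) = (piSS (m α)) (dualLOp U (σ a) (θd f))
      rw [hdL]
    rw [hbL, hbR, h2 (σ a) α]
  · intro a ε hε
    obtain ⟨i, hi⟩ := h3 (σ a) (ε / (‖θd‖ + 1)) (by positivity)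
    refine ⟨i, fun j hj => ?_⟩
    have hpiSS : piSS ((m j).comp T) = (piSS (m j)).comp θd := by
      ext f
      show (m j) (T (piStar A f)) = (m j) (piStar U (θd f))
      rw [hpiT]
    have hbR : bsmulR a ((piSS (m j)).comp θd) = (bsmulR (σ a) (piSS (m j))).comp θd := by
      ext f
      show (piSS (m j)) (θd (dualLOp A a f)) = (piSS (m j)) (dualLOp U (σ a) (θd f))
      rw [hdL]
    have hincl : inclB a = (inclB (σ a)).comp θd := by
      ext f
      show f a = f (θ (σ a))
      rw [hσ]
    dsimp only
    rw [hpiSS, hbR, hincl, dist_eq_norm, ← ContinuousLinearMap.sub_comp]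
    have hY : ‖bsmulR (σ a) (piSS (m j)) - inclB (σ a)‖ < ε / (‖θd‖ + 1) := by
      have := hi j hj
      rwa [dist_eq_norm] at this
    calc ‖(bsmulR (σ a) (piSS (m j)) - inclB (σ a)).comp θd‖
        ≤ ‖bsmulR (σ a) (piSS (m j)) - inclB (σ a)‖ * ‖θd‖ := opNorm_comp_le _ _
      _ ≤ ‖bsmulR (σ a) (piSS (m j)) - inclB (σ a)‖ * (‖θd‖ + 1) := by
          apply mul_le_mul_of_nonneg_left (by linarith) (norm_nonneg _)
      _ < ε := by
          rw [← lt_div_iff₀ (by positivity : (0:ℝ) < ‖θd‖ + 1)]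
          exact hY

/-- Existence of the continuous "matrix entry" extraction maps on `UP(I, A)`. -/
theorem exists_entry_clm (I : Type) [LinearOrder I] (A : Type)
    [NonUnitalNormedRing A] [NormedSpace ℂ A] [CompleteSpace A]
    (U : Type) [NonUnitalNormedRing U] [NormedSpace ℂ U]
    (e : I → I → A → U) (hU : IsUpperTriangularL1 I A U e)
    (i₁ j₁ : I) (hij : i₁ ≤ j₁) :
    ∃ Ent : U →L[ℂ] A, ∀ (i j : I) (a : A),
      Ent (e i j a) = if i = i₁ ∧ j = j₁ then a else 0 := by
  classical
  set L : (I × I →₀ A) →ₗ[ℂ] U :=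
    Finsupp.lsum ℂ (fun p : I × I => IsLinearMap.mk' (e p.1 p.2) (hU.1 p.1 p.2)) with hL
  have hLapp : ∀ f : I × I →₀ A, L f = ∑ p ∈ f.support, e p.1 p.2 (f p) := by
    intro f; rfl
  have hLnorm : ∀ f : I × I →₀ A,
      ‖L f‖ = ∑ p ∈ f.support.filter (fun p => p.1 ≤ p.2), ‖f p‖ := by
    intro f; rw [hLapp]; exact hU.2.2.2.1 f.support (fun p => f p)
  have hLsingle : ∀ (p : I × I) (a : A), L (Finsupp.single p a) = e p.1 p.2 a := by
    intro p a
    rw [hL, Finsupp.lsum_apply]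
    exact Finsupp.sum_single_index (by simpa using (hU.1 p.1 p.2).map_zero)
  have hbound : ∀ f : I × I →₀ A, ‖f (i₁, j₁)‖ ≤ ‖L f‖ := by
    intro f
    rw [hLnorm]
    by_cases hmem : (i₁, j₁) ∈ f.support
    · exact Finset.single_le_sum (f := fun p => ‖f p‖) (fun p _ => norm_nonneg _)
        (Finset.mem_filter.2 ⟨hmem, hij⟩)
    · rw [Finsupp.notMem_support_iff.1 hmem, norm_zero]
      exact Finset.sum_nonneg fun p _ => norm_nonneg _
  set ev : (I × I →₀ A) →ₗ[ℂ] A := Finsupp.lapply (i₁, j₁) with hev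
  have hkerle : LinearMap.ker L ≤ LinearMap.ker ev := by
    intro f hf
    rw [LinearMap.mem_ker] at hf ⊢
    have := hbound f
    rw [hf, norm_zero] at this
    simpa [hev] using norm_le_zero_iff.1 this
  set E₀lin : LinearMap.range L →ₗ[ℂ] A :=
    ((LinearMap.ker L).liftQ ev hkerle).comp (LinearMap.quotKerEquivRange L).symm.toLinearMap
    with hE₀lin
  have hE₀app : ∀ (f : I × I →₀ A) (h : L f ∈ LinearMap.range L),
      E₀lin ⟨L f, h⟩ = f (i₁, j₁) := by
    intro f h
    rw [hE₀lin]
    simp only [LinearMap.comp_apply, LinearEquiv.coe_toLinearMap]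
    rw [LinearMap.quotKerEquivRange_symm_apply_image L f h]
    rfl
  have hE₀bound : ∀ u : LinearMap.range L, ‖E₀lin u‖ ≤ 1 * ‖u‖ := by
    rintro ⟨u, hu⟩
    obtain ⟨f, rfl⟩ := hu
    rw [hE₀app f ⟨f, rfl⟩, one_mul]
    exact hbound f
  set E₀ : LinearMap.range L →L[ℂ] A := E₀lin.mkContinuous 1 hE₀bound with hE₀
  have hspan : Submodule.span ℂ {u : U | ∃ i j a, i ≤ j ∧ u = e i j a} ≤ LinearMap.range L := by
    rw [Submodule.span_le]
    rintro u ⟨i, j, a, hij', rfl⟩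
    exact ⟨Finsupp.single (i, j) a, hLsingle (i, j) a⟩
  have hdense : Dense (LinearMap.range L : Set U) := by
    rw [Submodule.dense_iff_topologicalClosure_eq_top]
    exact top_unique (hU.2.2.2.2 ▸ Submodule.topologicalClosure_mono hspan)
  have hdr : DenseRange ((LinearMap.range L).subtypeL : LinearMap.range L →L[ℂ] U) := by
    show Dense (Set.range _)
    convert hdense using 1
    ext x
    simp
  have hui : IsUniformInducing ((LinearMap.range L).subtypeL : LinearMap.range L →L[ℂ] U) :=
    isUniformEmbedding_subtype_val.isUniformInducing
  refine ⟨E₀.extend (LinearMap.range L).subtypeL, ?_⟩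
  intro i j a
  by_cases hle : i ≤ j
  · have : e i j a = (LinearMap.range L).subtypeL ⟨L (Finsupp.single (i, j) a),
        LinearMap.mem_range_self L (Finsupp.single (i, j) a)⟩ := by simp [hLsingle]
    rw [this, ContinuousLinearMap.extend_eq E₀ hdr hui]
    rw [hE₀, LinearMap.mkContinuous_apply, hE₀app]
    rw [Finsupp.single_apply]
    congr 1
    simp [Prod.ext_iff]
  · rw [hU.2.1 i j a hle, map_zero]
    have : ¬(i = i₁ ∧ j = j₁) := by rintro ⟨rfl, rfl⟩; exact hle hij
    rw [if_neg this]

end Aux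

set_option maxHeartbeats 2000000 in
/-- Let `I` be a totally ordered set with a smallest element and let `A`
be a Banach algebra admitting a character `φ`.  Then `UP(I, A)` is strong pseudo-amenable
if and only if `A` is strong pseudo-amenable and `|I| = 1`. -/
theorem strongPseudoAmenable_upperTriangular_iff
    (I : Type) [LinearOrder I] (i₀ : I) (hi₀ : ∀ i : I, i₀ ≤ i)
    (A : Type) [NonUnitalNormedRing A] [NormedSpace ℂ A] [IsScalarTower ℂ A A]
    [SMulCommClass ℂ A A] [CompleteSpace A]
    (φ : A →ₗ[ℂ] ℂ) (hφ : IsCharacter A φ)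
    (U : Type) [NonUnitalNormedRing U] [NormedSpace ℂ U] [IsScalarTower ℂ U U]
    [SMulCommClass ℂ U U] [CompleteSpace U]
    (e : I → I → A → U) (hU : IsUpperTriangularL1 I A U e) :
    StrongPseudoAmenable U ↔ (StrongPseudoAmenable A ∧ ∀ i j : I, i = j) := by
  classical
  obtain ⟨hφ0, hφmul⟩ := hφ
  have φbnd : ∀ a : A, ‖φ a‖ ≤ ‖a‖ := char_norm_le φ hφmul
  set φc : A →L[ℂ] ℂ := φ.mkContinuous 1 (fun a => by rw [one_mul]; exact φbnd a) with hφcdef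
  have hφc_apply : ∀ a, φc a = φ a := fun a => rfl
  obtain ⟨θ, hθval⟩ := exists_entry_clm I A U e hU i₀ i₀ le_rfl
  have hdense : Dense ((Submodule.span ℂ {u : U | ∃ i j a, i ≤ j ∧ u = e i j a}) : Set U) := by
    rw [Submodule.dense_iff_topologicalClosure_eq_top]
    exact hU.2.2.2.2
  have hθmul : ∀ x y : U, θ (x * y) = θ x * θ y := by
    have key : (ContinuousLinearMap.compL ℂ U U A θ).comp (ContinuousLinearMap.mul ℂ U)
        = ((ContinuousLinearMap.compL ℂ U A A).flip θ).comp
            ((ContinuousLinearMap.mul ℂ A).comp θ) := by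
      apply ContinuousLinearMap.ext_on hdense
      rintro u ⟨i, j, a, hij, rfl⟩
      apply ContinuousLinearMap.ext_on hdense
      rintro v ⟨k, l, b, hkl, rfl⟩
      show θ (e i j a * e k l b) = θ (e i j a) * θ (e k l b)
      rw [hU.2.2.1 i j k l hij hkl a b, hθval, hθval]
      by_cases hjk : j = k
      · subst hjk
        rw [if_pos rfl, hθval]
        by_cases h1 : i = i₀
        · by_cases h2 : l = i₀
          · have hj : j = i₀ := le_antisymm (h2 ▸ hkl) (hi₀ j)
            simp [h1, h2, hj]
          · simp [h2]
        · simp [h1]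
      · rw [if_neg hjk, map_zero]
        by_cases h1 : i = i₀ ∧ j = i₀
        · by_cases h2 : k = i₀ ∧ l = i₀
          · exact absurd (h1.2.trans h2.1.symm) hjk
          · rw [if_neg h2, mul_zero]
        · rw [if_neg h1, zero_mul]
    intro x y
    have := DFunLike.congr_fun (DFunLike.congr_fun key x) y
    exact this
  have hsec : ∀ a : A, θ (e i₀ i₀ a) = a := by
    intro a
    rw [hθval, if_pos ⟨rfl, rfl⟩]
  constructor
  · intro hU_spa
    constructor
    · exact spa_transfer θ hθmul (fun a => e i₀ i₀ a) hsec hU_spa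
    · intro i j
      by_contra hij
      have hex : ∃ j₀ : I, i₀ < j₀ := by
        rcases eq_or_ne i i₀ with h | h
        · exact ⟨j, (hi₀ j).lt_of_ne (fun hj0 => hij (by rw [h, ← hj0]))⟩
        · exact ⟨i, (hi₀ i).lt_of_ne (Ne.symm h)⟩
      obtain ⟨j₀, hj₀⟩ := hex
      obtain ⟨E₂, hE₂⟩ := exists_entry_clm I A U e hU i₀ j₀ hj₀.le
      set F : U →L[ℂ] ℂ := φc.comp E₂ with hFdef
      set ψ : U →L[ℂ] ℂ := φc.comp θ with hψdef
      have hexc : ∃ a₀ : A, φ a₀ ≠ 0 := by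
        by_contra h
        push_neg at h
        exact hφ0 (LinearMap.ext fun a => h a)
      obtain ⟨a₀, ha₀⟩ := hexc
      set c : A := (φ a₀)⁻¹ • a₀ with hcdef
      have hφc1 : φ c = 1 := by rw [hcdef, map_smul, smul_eq_mul, inv_mul_cancel₀ ha₀]
      set r : U := e i₀ j₀ c with hrdef
      have hFr : F r = 1 := by
        show φc (E₂ (e i₀ j₀ c)) = 1
        rw [hE₂, if_pos ⟨rfl, rfl⟩]
        exact hφc1
      have hψmul : ∀ x y : U, ψ (x * y) = ψ x * ψ y := by
        intro x y
        show φc (θ (x * y)) = φc (θ x) * φc (θ y)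
        rw [hθmul]
        exact hφmul _ _
      have hFxr : ∀ x : U, F (x * r) = ψ x := by
        have key : F.comp ((ContinuousLinearMap.mul ℂ U).flip r) = ψ := by
          apply ContinuousLinearMap.ext_on hdense
          rintro u ⟨i', j', a, hij', rfl⟩
          show F (e i' j' a * r) = ψ (e i' j' a)
          rw [hrdef, hU.2.2.1 i' j' i₀ j₀ hij' hj₀.le a c]
          show φc (E₂ _) = φc (θ _)
          rw [hθval]
          by_cases h1 : j' = i₀
          · rw [if_pos h1, hE₂]
            by_cases h2 : i' = i₀
            · rw [if_pos ⟨h2, rfl⟩, if_pos ⟨h2, h1⟩]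
              show φ (a * c) = φ a
              rw [hφmul, hφc1, mul_one]
            · rw [if_neg (fun h => h2 h.1), if_neg (fun h => h2 h.1)]
          · rw [if_neg h1, map_zero, if_neg (fun h => h1 h.2), map_zero]
        intro x
        exact DFunLike.congr_fun key x
      have hψrx : ∀ x : U, ψ (r * x) = 0 := by
        have key : ψ.comp (ContinuousLinearMap.mul ℂ U r) = 0 := by
          apply ContinuousLinearMap.ext_on hdense
          rintro u ⟨k, l, b, hkl, rfl⟩
          show ψ (r * e k l b) = 0
          rw [hrdef, hU.2.2.1 i₀ j₀ k l hj₀.le hkl c b]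
          by_cases h1 : j₀ = k
          · rw [if_pos h1]
            show φc (θ _) = 0
            rw [hθval]
            have hne : ¬(i₀ = i₀ ∧ l = i₀) := by
              rintro ⟨-, h2⟩
              exact absurd (h2 ▸ (h1 ▸ hkl)) (not_le.2 hj₀)
            rw [if_neg hne, map_zero]
          · rw [if_neg h1, map_zero]
        intro x
        exact DFunLike.congr_fun key x
      obtain ⟨D, m, h1, h2, h3⟩ := hU_spa
      set B11 : BilForms U := ψ.smulRight ψ with hB11
      set Cp : BilForms U := ψ.smulRight F with hCp
      have claimA : piStar U (dualLOp U r F) = B11 := by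
        ext x y
        show F ((x * y) * r) = ψ x • ψ y
        rw [hFxr, hψmul, smul_eq_mul]
      have claimB : leftBil U r Cp = 0 := by
        ext x y
        show ψ (r * x) • F y = (0 : U →L[ℂ] NormedSpace.Dual ℂ U) x y
        rw [hψrx, zero_smul]
        rfl
      have claimC : rightBil U r Cp = B11 := by
        ext x y
        show ψ x • F (y * r) = ψ x • ψ y
        rw [hFxr]
      obtain ⟨i1, hi1⟩ := h3 r ((1:ℝ)/2 / (‖F‖ + 1)) (by positivity)
      obtain ⟨i2, hi2⟩ := h1 r ((1:ℝ)/2 / (‖Cp‖ + 1)) (by positivity)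
      obtain ⟨k, hk1, hk2⟩ := D.directed i1 i2
      have e1 : ‖m k B11 - 1‖ < 1/2 := by
        have hd := hi1 k hk1
        rw [dist_eq_norm] at hd
        have hval : (bsmulR r (piSS (m k)) - inclB r) F = m k B11 - 1 := by
          rw [ContinuousLinearMap.sub_apply]
          have hA' : (bsmulR r (piSS (m k))) F = m k B11 := by
            show (m k) (piStar U (dualLOp U r F)) = m k B11
            rw [claimA]
          have hB' : (inclB r) F = 1 := hFr
          rw [hA', hB']
        calc ‖m k B11 - 1‖ = ‖(bsmulR r (piSS (m k)) - inclB r) F‖ := by rw [hval]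
          _ ≤ ‖bsmulR r (piSS (m k)) - inclB r‖ * ‖F‖ := ContinuousLinearMap.le_opNorm _ _
          _ < ((1:ℝ)/2 / (‖F‖ + 1)) * (‖F‖ + 1) :=
              mul_lt_mul'' hd (lt_add_one _) (norm_nonneg _) (norm_nonneg _)
          _ = 1/2 := div_mul_cancel₀ _ (by positivity)
      have e2 : ‖m k B11‖ < 1/2 := by
        have hd := hi2 k hk2
        rw [dist_zero_right] at hd
        have hval : (tsmulL r (m k) - tsmulR r (m k)) Cp = -(m k B11) := by
          rw [ContinuousLinearMap.sub_apply]
          have hL : tsmulL r (m k) Cp = 0 := by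
            show (m k) (leftBil U r Cp) = 0
            rw [claimB, map_zero]
          have hR : tsmulR r (m k) Cp = m k B11 := by
            show (m k) (rightBil U r Cp) = m k B11
            rw [claimC]
          rw [hL, hR, zero_sub]
        calc ‖m k B11‖ = ‖(tsmulL r (m k) - tsmulR r (m k)) Cp‖ := by rw [hval, norm_neg]
          _ ≤ ‖tsmulL r (m k) - tsmulR r (m k)‖ * ‖Cp‖ := ContinuousLinearMap.le_opNorm _ _
          _ < ((1:ℝ)/2 / (‖Cp‖ + 1)) * (‖Cp‖ + 1) :=
              mul_lt_mul'' hd (lt_add_one _) (norm_nonneg _) (norm_nonneg _)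
          _ = 1/2 := div_mul_cancel₀ _ (by positivity)
      have hcontra : (1:ℝ) ≤ ‖m k B11 - 1‖ + ‖m k B11‖ := by
        calc (1:ℝ) = ‖(m k B11 - 1) - m k B11‖ := by
              rw [show (m k B11 - 1) - m k B11 = -1 by ring, norm_neg, norm_one]
          _ ≤ ‖m k B11 - 1‖ + ‖m k B11‖ := norm_sub_le _ _
      linarith
  · rintro ⟨hA, hsub⟩
    have hnorm_e : ∀ a : A, ‖e i₀ i₀ a‖ = ‖a‖ := by
      intro a
      have := hU.2.2.2.1 {(i₀, i₀)} (fun _ => a)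
      simpa [Finset.filter_singleton] using this
    set eClm : A →L[ℂ] U := LinearMap.mkContinuous (IsLinearMap.mk' (e i₀ i₀) (hU.1 i₀ i₀)) 1
      (fun a => by rw [one_mul]; exact (hnorm_e a).le) with heClmdef
    have heClm_apply : ∀ a, eClm a = e i₀ i₀ a := fun a => rfl
    have hmul_e : ∀ a b : A, eClm (a * b) = eClm a * eClm b := by
      intro a b
      rw [heClm_apply, heClm_apply, heClm_apply,
        hU.2.2.1 i₀ i₀ i₀ i₀ le_rfl le_rfl a b, if_pos rfl]
    have hsec' : ∀ u : U, eClm (θ u) = u := by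
      have key : eClm.comp θ = ContinuousLinearMap.id ℂ U := by
        apply ContinuousLinearMap.ext_on hdense
        rintro u ⟨i, j, a, hij, rfl⟩
        have hi' : i = i₀ := hsub i i₀
        have hj' : j = i₀ := hsub j i₀
        show eClm (θ (e i j a)) = e i j a
        rw [hi', hj', hθval, if_pos ⟨rfl, rfl⟩, heClm_apply]
      intro u
      exact DFunLike.congr_fun key u
    exact spa_transfer eClm hmul_e (fun u => θ u) hsec' hA
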